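/- Coloured quiver mutation restricted to the class Q_n^m is invertible; more precisely, if Q ∈ Q_n^m and v is any vertex of Q, then μ_v^{m+1}(Q) = Q, i.e. applying the coloured mutation at v exactly m+1 times returns the original quiver. -/

import Mathlib

namespace MutClassAn

open Finset

variable {V : Type} [Fintype V] [DecidableEq V]

/-- `M i j c` is the number of arrows from `i` to `j` of colour `c`.
An `m`-coloured quiver has no loops, is monochromatic and skew-symmetric
(`c.rev = m - c` in `Fin (m+1)`). -/
def IsColouredQuiver {m : ℕ} (M : V → V → Fin (m + 1) → ℕ) : Prop :=
  (∀ i c, M i i c = 0) ∧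
  (∀ i j c c', M i j c ≠ 0 → M i j c' ≠ 0 → c = c') ∧
  (∀ i j c, M i j c = M j i c.rev)

/-- A coloured quiver is simple if there is at most one arrow between any two
vertices in each direction. -/
def IsSimpleCQ {m : ℕ} (M : V → V → Fin (m + 1) → ℕ) : Prop :=
  ∀ i j : V, (∑ c, M i j c) ≤ 1

/-- Adjacency in the underlying graph. -/
def CQAdj {m : ℕ} (M : V → V → Fin (m + 1) → ℕ) (i j : V) : Prop :=
  i ≠ j ∧ ∃ c, M i j c ≠ 0

/-- The colour of the (unique, for simple quivers) arrow from `i` to `j`. -/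
def colourOf {m : ℕ} (M : V → V → Fin (m + 1) → ℕ) (i j : V) : ℕ :=
  ∑ c : Fin (m + 1), M i j c * c.val

/-- Buan–Thomas coloured quiver mutation at the vertex `j`. -/
def mutate {m : ℕ} (M : V → V → Fin (m + 1) → ℕ) (j : V) :
    V → V → Fin (m + 1) → ℕ := fun i k c =>
  if k = j then M i k (c + 1)
  else if i = j then M i k (c - 1)
  else ((M i k c : ℤ) - ∑ t ∈ Finset.univ.filter (fun t => t ≠ c), (M i k t : ℤ)
      + ((M i j c : ℤ) - (M i j (c - 1) : ℤ)) * (M j k 0 : ℤ)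
      + (M i j (Fin.last m) : ℤ) * ((M j k c : ℤ) - (M j k (c + 1) : ℤ))).toNat

/-- Mutation equivalence: the equivalence relation generated by single mutations. -/
def MutEquiv {m : ℕ} (M M' : V → V → Fin (m + 1) → ℕ) : Prop :=
  Relation.EqvGen (fun A B => ∃ v, mutate A v = B) M M'

/-- A hole is an induced cycle of length at least `4` in the underlying graph. -/
def HasHole {m : ℕ} (M : V → V → Fin (m + 1) → ℕ) : Prop :=
  ∃ k : ℕ, 4 ≤ k ∧ ∃ x : ZMod k → V, Function.Injective x ∧
    (∀ i, CQAdj M (x i) (x (i + 1))) ∧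
    ∀ i j : ZMod k, i ≠ j → j ≠ i + 1 → i ≠ j + 1 → ¬ CQAdj M (x i) (x j)

/-- A clique: a set of pairwise adjacent vertices. -/
def IsCliqueCQ {m : ℕ} (M : V → V → Fin (m + 1) → ℕ) (S : Set V) : Prop :=
  S.Pairwise (CQAdj M)

/-- The set of neighbours of a vertex. -/
def nbrs {m : ℕ} (M : V → V → Fin (m + 1) → ℕ) (v : V) : Set V :=
  {u | CQAdj M v u}

/-- Connectedness of the underlying graph. -/
def CQConnected {m : ℕ} (M : V → V → Fin (m + 1) → ℕ) : Prop :=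
  ∀ u w : V, Relation.ReflTransGen (CQAdj M) u w

/-- Condition (1) of the class `𝒬ₙᵐ`: the neighbourhood of every vertex is covered
by two cliques of sizes `r, k ≤ m + 2` with `r + k = z + 2`, with no arrows between
the two cliques away from the vertex. -/
def Cond1 {m : ℕ} (M : V → V → Fin (m + 1) → ℕ) : Prop :=
  ∀ v : V, (nbrs M v).Nonempty →
    ∃ R K : Finset V, v ∈ R ∧ v ∈ K ∧ IsCliqueCQ M ↑R ∧ IsCliqueCQ M ↑K ∧
      R.card + K.card = (nbrs M v).ncard + 2 ∧ R.card ≤ m + 2 ∧ K.card ≤ m + 2 ∧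
      (∀ u ∈ nbrs M v, u ∈ R ∨ u ∈ K) ∧
      ∀ a ∈ R, a ≠ v → ∀ b ∈ K, b ≠ v → ¬ CQAdj M a b

/-- Condition (2) of the class `𝒬ₙᵐ`: every triangle inside a clique has colour
sum `m - 1` along one of its two orientations (sums taken in `ℤ`). -/
def Cond2 {m : ℕ} (M : V → V → Fin (m + 1) → ℕ) : Prop :=
  ∀ v1 v2 v3 : V, v1 ≠ v2 → v2 ≠ v3 → v1 ≠ v3 →
    CQAdj M v1 v2 → CQAdj M v2 v3 → CQAdj M v1 v3 →
    ((colourOf M v2 v1 : ℤ) + (colourOf M v1 v3 : ℤ) + (colourOf M v3 v2 : ℤ)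
        = (m : ℤ) - 1 ∨
      ((m : ℤ) - colourOf M v2 v1) + ((m : ℤ) - colourOf M v1 v3)
          + ((m : ℤ) - colourOf M v3 v2) = (m : ℤ) - 1)

/-- Membership in the class `𝒬ₙᵐ` (`n` being the cardinality of the vertex set). -/
def MemQClass {m : ℕ} (M : V → V → Fin (m + 1) → ℕ) : Prop :=
  IsColouredQuiver M ∧ IsSimpleCQ M ∧ CQConnected M ∧ ¬ HasHole M ∧ Cond1 M ∧ Cond2 M

/-- An `Aₙ`-quiver: the underlying graph is the path graph on the vertex set. -/
def IsAnQuiver {m : ℕ} (M : V → V → Fin (m + 1) → ℕ) : Prop :=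
  ∃ e : Fin (Fintype.card V) ≃ V,
    ∀ i j : Fin (Fintype.card V),
      CQAdj M (e i) (e j) ↔ (i.val + 1 = j.val ∨ j.val + 1 = i.val)

/-- The coloured quiver on `Fin n` whose underlying graph is the path
`0 — 1 — ⋯ — (n-1)`, with the arrow `j+1 → j` coloured `c j` and the arrow
`j → j+1` coloured `m - c j`. -/
def pathQuiver (m n : ℕ) (c : ℕ → Fin (m + 1)) :
    Fin n → Fin n → Fin (m + 1) → ℕ := fun i j d =>
  if j.val + 1 = i.val ∧ d = c j.val then 1
  else if i.val + 1 = j.val ∧ d = (c i.val).rev then 1 else 0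

/-- Delete all arrows between vertices of `S`. -/
def deleteArrows {m : ℕ} (M : V → V → Fin (m + 1) → ℕ) (S : Finset V) :
    V → V → Fin (m + 1) → ℕ := fun i j c =>
  if i ∈ S ∧ j ∈ S then 0 else M i j c

/-- The connected component of `u` is an `A_k`-quiver (a path) for some `k ≥ 1`. -/
def ComponentIsPath {m : ℕ} (M : V → V → Fin (m + 1) → ℕ) (u : V) : Prop :=
  ∃ (k : ℕ) (x : Fin k → V), 1 ≤ k ∧ Function.Injective x ∧
    Set.range x = {w | Relation.ReflTransGen (CQAdj M) u w} ∧
    ∀ i j : Fin k, CQAdj M (x i) (x j) ↔ (i.val + 1 = j.val ∨ j.val + 1 = i.val)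

/-- An almost extremal clique: deleting its arrows leaves a connected component
which is an `A_k`-quiver for some `k ≥ 1`. -/
def AlmostExtremalClique {m : ℕ} (M : V → V → Fin (m + 1) → ℕ) (S : Finset V) : Prop :=
  IsCliqueCQ M ↑S ∧ ∃ u : V, ComponentIsPath (deleteArrows M S) u

/-- An extremal clique: deleting its arrows leaves a single-vertex component. -/
def ExtremalClique {m : ℕ} (M : V → V → Fin (m + 1) → ℕ) (S : Finset V) : Prop :=
  IsCliqueCQ M ↑S ∧
    ∃ u : V, {w | Relation.ReflTransGen (CQAdj (deleteArrows M S)) u w} = {u}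

/-- A coloured clique structure on a vertex type: colours `c i j ∈ {0,…,m}` with
skew-symmetry `c j i = m - c i j` and the triangle condition. -/
def IsCliqueColouring (m : ℕ) {W : Type} (c : W → W → ℕ) : Prop :=
  (∀ i j : W, i ≠ j → c i j ≤ m) ∧
  (∀ i j : W, i ≠ j → c i j + c j i = m) ∧
  ∀ i j l : W, i ≠ j → j ≠ l → i ≠ l →
    ((c i j : ℤ) + (c j l : ℤ) + (c l i : ℤ) = (m : ℤ) - 1 ∨
      (c i j : ℤ) + (c j l : ℤ) + (c l i : ℤ) = 2 * (m : ℤ) + 1)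

/-- Cyclic successor in `Fin k`. -/
def cyc {k : ℕ} (i : Fin k) : Fin k :=
  ⟨(i.val + 1) % k, Nat.mod_lt _ i.pos⟩

/-- The weight of the Hamiltonian cycle `x 0 → x 1 → ⋯ → x (k-1) → x 0`:
the sum of the colours of its arrows. -/
def cycleWeight {W : Type} (c : W → W → ℕ) {k : ℕ} (x : Fin k → W) : ℤ :=
  ∑ i : Fin k, (c (x i) (x (cyc i)) : ℤ)

/-- The Hamiltonian cycle on `k+1` vertices obtained from the cycle
`x 0 → ⋯ → x (k-1) → x 0` by inserting the vertex `x (Fin.last k)`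
immediately after `x j`. -/
def insertAfter {W : Type} {k : ℕ} (x : Fin (k + 1) → W) (j : Fin k) :
    Fin (k + 1) → W := fun i =>
  if i = 0 then x (Fin.last k)
  else x (Fin.castSucc ⟨(j.val + i.val) % k, Nat.mod_lt _ j.pos⟩)

/-! ### Auxiliary machinery for the periodicity theorem -/

section Aux

variable {m : ℕ}

/-- The elementary step applied to the multiplicity vector of a pair of vertices
during a mutation, with correction term `d`. -/
private def Sstep (N : Fin (m + 1) → ℕ) (d : Fin (m + 1) → ℤ) : Fin (m + 1) → ℕ :=
  fun c => ((N c : ℤ) - ∑ t ∈ Finset.univ.filter (fun t => t ≠ c), (N t : ℤ) + d c).toNat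

/-- Elementary correction term `δ_p - δ_q`. -/
private def dd (p q : Fin (m + 1)) : Fin (m + 1) → ℤ :=
  fun c => (if c = p then 1 else 0) - (if c = q then 1 else 0)

/-- At most one arrow: zero or a single arrow of some colour. -/
private def Shape1 (N : Fin (m + 1) → ℕ) : Prop :=
  (N = fun _ => 0) ∨ ∃ e, N = fun c => if c = e then 1 else 0

/-- Supported on at most one colour. -/
private def ShapeK (N : Fin (m + 1) → ℕ) : Prop :=
  ∃ e k, N = fun c => if c = e then k else 0

private lemma shape1_shapeK {N : Fin (m + 1) → ℕ} (h : Shape1 N) : ShapeK N := by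
  rcases h with h | ⟨e, h⟩
  · exact ⟨0, 0, by rw [h]; funext c; simp⟩
  · exact ⟨e, 1, h⟩

private lemma sum_filter_ne (N : Fin (m + 1) → ℕ) (c : Fin (m + 1)) :
    ∑ t ∈ Finset.univ.filter (fun t => t ≠ c), (N t : ℤ) = (∑ t, (N t : ℤ)) - N c := by
  rw [Finset.filter_ne', Finset.sum_erase_eq_sub (Finset.mem_univ c)]

private lemma Sstep_eq (N : Fin (m + 1) → ℕ) (d : Fin (m + 1) → ℤ) (c : Fin (m + 1)) :
    Sstep N d c = (2 * (N c : ℤ) - (∑ t, (N t : ℤ)) + d c).toNat := by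
  unfold Sstep
  rw [sum_filter_ne]
  congr 1
  ring

private lemma Sstep_ite (e : Fin (m + 1)) (k : ℕ) (d : Fin (m + 1) → ℤ) (c : Fin (m + 1)) :
    Sstep (fun c => if c = e then k else 0) d c
      = (2 * (if c = e then (k : ℤ) else 0) - k + d c).toNat := by
  rw [Sstep_eq]
  simp [apply_ite (fun n : ℕ => (n : ℤ)), Finset.sum_ite_eq']

private lemma Sstep_zerofun (d : Fin (m + 1) → ℤ) (c : Fin (m + 1)) :
    Sstep (fun _ => 0) d c = (d c).toNat := by
  rw [Sstep_eq]; simp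

private lemma Sstep_zero {N : Fin (m + 1) → ℕ} (h : ShapeK N) :
    Sstep N (fun _ => 0) = N := by
  obtain ⟨e, k, rfl⟩ := h
  funext c
  rw [Sstep_ite]
  by_cases hc : c = e <;> simp [hc] <;> omega

/-- Applying the step with correction `δ_p - δ_q` and then with `δ_q - δ_p`
returns the original (single-arrow) multiplicity vector; moreover the
intermediate state is supported on one colour. -/
private lemma Sstep_first {p q : Fin (m + 1)} (hpq : p ≠ q) {N : Fin (m + 1) → ℕ}
    (h : Shape1 N) :
    ShapeK (Sstep N (dd p q)) ∧ Sstep (Sstep N (dd p q)) (dd q p) = N := by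
  rcases h with h | ⟨e, h⟩
  · subst h
    have h1 : Sstep (fun _ => (0:ℕ)) (dd p q) = fun c => if c = p then 1 else 0 := by
      funext c
      rw [Sstep_zerofun]
      unfold dd
      by_cases hc : c = p <;> by_cases hc' : c = q <;> simp_all <;> omega
    rw [h1]
    refine ⟨⟨p, 1, rfl⟩, ?_⟩
    funext c
    rw [Sstep_ite]
    unfold dd
    by_cases hc : c = p <;> by_cases hc' : c = q <;> simp_all <;> omega
  · subst h
    by_cases hep : e = p
    · subst hep
      have h1 : Sstep (fun c => if c = e then 1 else 0) (dd e q)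
          = fun c => if c = e then 2 else 0 := by
        funext c
        rw [Sstep_ite]
        unfold dd
        by_cases hc : c = e <;> by_cases hc' : c = q <;> simp_all <;> omega
      rw [h1]
      refine ⟨⟨e, 2, rfl⟩, ?_⟩
      funext c
      rw [Sstep_ite]
      unfold dd
      by_cases hc : c = e <;> by_cases hc' : c = q <;> simp_all <;> omega
    · by_cases heq : e = q
      · subst heq
        have h1 : Sstep (fun c => if c = e then 1 else 0) (dd p e)
            = fun _ => 0 := by
          funext c
          rw [Sstep_ite]
          unfold dd
          by_cases hc : c = e <;> by_cases hc' : c = p <;> simp_all <;> omega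
        rw [h1]
        refine ⟨⟨0, 0, by funext c; simp⟩, ?_⟩
        funext c
        rw [Sstep_zerofun]
        unfold dd
        by_cases hc : c = e <;> by_cases hc' : c = p <;> simp_all <;> omega
      · have h1 : Sstep (fun c => if c = e then 1 else 0) (dd p q)
            = fun c => if c = e then 1 else 0 := by
          funext c
          rw [Sstep_ite]
          unfold dd
          by_cases hc : c = e <;> by_cases hc' : c = p <;> by_cases hc'' : c = q <;>
            simp_all <;> omega
        rw [h1]
        refine ⟨⟨e, 1, rfl⟩, ?_⟩
        funext c
        rw [Sstep_ite]
        unfold dd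
        by_cases hc : c = e <;> by_cases hc' : c = p <;> by_cases hc'' : c = q <;>
          simp_all <;> omega

/-- On a segment with vanishing corrections, a one-colour state is constant. -/
private lemma const_seg (N : ℕ → Fin (m + 1) → ℕ) (corr : ℕ → Fin (m + 1) → ℤ)
    (hstep : ∀ t, N (t + 1) = Sstep (N t) (corr t)) (a b : ℕ) (hab : a ≤ b)
    (hz : ∀ t, a ≤ t → t < b → corr t = fun _ => 0)
    (hs : ShapeK (N a)) : N b = N a := by
  induction b, hab using Nat.le_induction with
  | base => rfl
  | succ b hab ih =>
      have hb : N b = N a := ih (fun t h1 h2 => hz t h1 (by omega))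
      rw [hstep b, hb, hz b hab (by omega), Sstep_zero hs]

/-- The full orbit: two cancelling corrections at times `u < w < m + 1`. -/
private lemma orbit (N : ℕ → Fin (m + 1) → ℕ) (corr : ℕ → Fin (m + 1) → ℤ)
    (p q : Fin (m + 1)) (hpq : p ≠ q) (u w : ℕ) (huw : u < w) (hw : w < m + 1)
    (hstep : ∀ t, N (t + 1) = Sstep (N t) (corr t))
    (hcu : corr u = dd p q) (hcw : corr w = dd q p)
    (hz : ∀ t, t < m + 1 → t ≠ u → t ≠ w → corr t = fun _ => 0)
    (hN0 : Shape1 (N 0)) : N (m + 1) = N 0 := by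
  obtain ⟨hsh, hrec⟩ := Sstep_first hpq hN0 (p := p) (q := q)
  have h1 : N u = N 0 :=
    const_seg N corr hstep 0 u (by omega)
      (fun t ht1 ht2 => hz t (by omega) (by omega) (by omega)) (shape1_shapeK hN0)
  have h2 : N (u + 1) = Sstep (N 0) (dd p q) := by rw [hstep u, h1, hcu]
  have h3 : N w = N (u + 1) :=
    const_seg N corr hstep (u + 1) w (by omega)
      (fun t ht1 ht2 => hz t (by omega) (by omega) (by omega)) (h2 ▸ hsh)
  have h4 : N (w + 1) = N 0 := by rw [hstep w, h3, h2, hcw, hrec]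
  have h5 : N (m + 1) = N (w + 1) :=
    const_seg N corr hstep (w + 1) (m + 1) (by omega)
      (fun t ht1 ht2 => hz t (by omega) (by omega) (by omega))
      (h4 ▸ shape1_shapeK hN0)
  rw [h5, h4]

/-- Extract the shape of a simple multiplicity vector. -/
private lemma shape1_of_sum {N : Fin (m + 1) → ℕ} (h : (∑ c, N c) ≤ 1) : Shape1 N := by
  by_cases h0 : ∀ c, N c = 0
  · left; funext c; exact h0 c
  · push_neg at h0
    obtain ⟨e, he⟩ := h0
    right
    refine ⟨e, funext fun c => ?_⟩
    have hle : N e ≤ ∑ c, N c := Finset.single_le_sum (fun _ _ => Nat.zero_le _) (Finset.mem_univ e)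
    by_cases hc : c = e
    · subst hc; simp; omega
    · simp [hc]
      have hsub : ({c, e} : Finset (Fin (m + 1))) ⊆ Finset.univ := Finset.subset_univ _
      have hpair : N c + N e ≤ ∑ x, N x := by
        calc N c + N e = ∑ x ∈ ({c, e} : Finset (Fin (m + 1))), N x :=
              (Finset.sum_pair hc).symm
          _ ≤ ∑ x, N x := Finset.sum_le_sum_of_subset hsub
      omega

end Aux

open Fin.NatCast Fin.CommRing

/-- The entries of iterated mutation at `v` in the row and column of `v`
are colour shifts of the original entries. -/
private lemma shift_iterate {m : ℕ} (M : V → V → Fin (m + 1) → ℕ) (v : V) (t : ℕ) :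
    (∀ i c, ((fun A => mutate A v)^[t] M) i v c = M i v (c + (t : Fin (m + 1)))) ∧
    (∀ k c, k ≠ v → ((fun A => mutate A v)^[t] M) v k c = M v k (c - (t : Fin (m + 1)))) := by
  induction t with
  | zero => simp
  | succ t ih =>
    rw [Function.iterate_succ_apply']
    constructor
    · intro i c
      show mutate ((fun A => mutate A v)^[t] M) v i v c = _
      rw [show mutate ((fun A => mutate A v)^[t] M) v i v c
          = ((fun A => mutate A v)^[t] M) i v (c + 1) from if_pos rfl]
      rw [ih.1 i (c + 1)]
      congr 1
      push_cast
      ring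
    · intro k c hk
      show mutate ((fun A => mutate A v)^[t] M) v v k c = _
      rw [show mutate ((fun A => mutate A v)^[t] M) v v k c
          = ((fun A => mutate A v)^[t] M) v k (c - 1) from by
        show (if k = v then _ else if v = v then _ else _) = _
        rw [if_neg hk, if_pos rfl]]
      rw [ih.2 k (c - 1) hk]
      congr 1
      push_cast
      ring

/-- The mutation rule away from the mutation vertex, written via `Sstep`. -/
private lemma mutate_off {m : ℕ} (Q : V → V → Fin (m + 1) → ℕ) (v i k : V)
    (hi : i ≠ v) (hk : k ≠ v) :
    mutate Q v i k = Sstep (Q i k) (fun c =>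
      ((Q i v c : ℤ) - (Q i v (c - 1) : ℤ)) * (Q v k 0 : ℤ)
        + (Q i v (Fin.last m) : ℤ) * ((Q v k c : ℤ) - (Q v k (c + 1) : ℤ))) := by
  funext c
  show (if k = v then _ else if i = v then _ else _) = _
  rw [if_neg hk, if_neg hi]
  unfold Sstep
  congr 1
  ring

/-- Coloured mutation restricted to the class `𝒬ₙᵐ` is invertible: mutating
`m + 1` times at any vertex returns the original quiver. -/
theorem mutate_iterate_eq_self (m : ℕ) (hm : 1 ≤ m)
    (V : Type) [Fintype V] [DecidableEq V]
    (M : V → V → Fin (m + 1) → ℕ) (hM : MemQClass M) (v : V) :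
    (fun A => mutate A v)^[m + 1] M = M := by
  obtain ⟨-, hsimp, -⟩ := hM
  have hcast : ((m + 1 : ℕ) : Fin (m + 1)) = 0 := by simp
  funext i k
  by_cases hk : k = v
  · funext c
    rw [hk, (shift_iterate M v (m + 1)).1 i c, hcast, add_zero]
  by_cases hi : i = v
  · funext c
    rw [hi, (shift_iterate M v (m + 1)).2 k c hk, hcast, sub_zero]
  -- main case: both `i ≠ v` and `k ≠ v`
  have hshapeIK : Shape1 (M i k) := shape1_of_sum (hsimp i k)
  have hA : Shape1 (M i v) := shape1_of_sum (hsimp i v)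
  have hB : Shape1 (M v k) := shape1_of_sum (hsimp v k)
  set corr : ℕ → Fin (m + 1) → ℤ := fun t c =>
        ((M i v (c + (t : Fin (m + 1))) : ℤ) - (M i v (c - 1 + (t : Fin (m + 1))) : ℤ))
            * (M v k (0 - (t : Fin (m + 1))) : ℤ)
          + (M i v (Fin.last m + (t : Fin (m + 1))) : ℤ)
            * ((M v k (c - (t : Fin (m + 1))) : ℤ)
                - (M v k (c + 1 - (t : Fin (m + 1))) : ℤ)) with hcorrdef
  have hstep : ∀ t, ((fun A => mutate A v)^[t + 1] M) i k
      = Sstep (((fun A => mutate A v)^[t] M) i k) (corr t) := by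
    intro t
    rw [Function.iterate_succ_apply']
    show mutate ((fun A => mutate A v)^[t] M) v i k = _
    rw [mutate_off ((fun A => mutate A v)^[t] M) v i k hi hk]
    congr 1
    funext c'
    have s1 : ∀ c, ((fun A => mutate A v)^[t] M) i v c = M i v (c + (t : Fin (m + 1))) :=
      fun c => (shift_iterate M v t).1 i c
    have s2 : ∀ c, ((fun A => mutate A v)^[t] M) v k c = M v k (c - (t : Fin (m + 1))) :=
      fun c => (shift_iterate M v t).2 k c hk
    simp only [hcorrdef, s1, s2]
  have hgoal : (fun t => ((fun A => mutate A v)^[t] M) i k) (m + 1)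
        = (fun t => ((fun A => mutate A v)^[t] M) i k) 0
      → ((fun A => mutate A v)^[m + 1] M) i k = M i k := fun h => h
  rcases hA with hA0 | ⟨a, ha⟩
  · refine hgoal (const_seg (fun t => ((fun A => mutate A v)^[t] M) i k) corr hstep 0 (m + 1) (by omega) (fun t _ _ => ?_)
      (shape1_shapeK hshapeIK))
    funext c
    simp [hcorrdef, hA0]
  rcases hB with hB0 | ⟨b, hb⟩
  · refine hgoal (const_seg (fun t => ((fun A => mutate A v)^[t] M) i k) corr hstep 0 (m + 1) (by omega) (fun t _ _ => ?_)
      (shape1_shapeK hshapeIK))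
    funext c
    simp [hcorrdef, hB0]
  -- both `(i,v)` and `(v,k)` carry a single arrow, of colours `a` and `b`
  have hone : (1 : Fin (m + 1)) ≠ 0 := by
    intro h
    have h1 := congrArg Fin.val h
    rw [Fin.val_one', Fin.val_zero, Nat.mod_eq_of_lt (by omega)] at h1
    omega
  have hpq : a + b + 1 ≠ a + b := by
    intro h
    exact hone (add_left_cancel (h.trans (add_zero (a + b)).symm))
  have hlast : Fin.last m = -1 := eq_neg_of_add_eq_zero_left (Fin.last_add_one m)
  have hcorrval : ∀ t : ℕ, t < m + 1 → corr t =
      fun c => (if t = (a + 1 : Fin (m + 1)).val then dd (a + b + 1) (a + b) c else 0)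
             + (if t = (-b : Fin (m + 1)).val then dd (a + b) (a + b + 1) c else 0) := by
    intro t ht
    have hvt : ((t : Fin (m + 1))).val = t := Fin.val_cast_of_lt ht
    have ht1 : (t = (a + 1 : Fin (m + 1)).val) ↔ ((t : Fin (m + 1)) = a + 1) := by
      rw [Fin.ext_iff, hvt]
    have ht2 : (t = (-b : Fin (m + 1)).val) ↔ ((t : Fin (m + 1)) = -b) := by
      rw [Fin.ext_iff, hvt]
    funext c
    simp only [hcorrdef, ha, hb]
    push_cast
    set τ : Fin (m + 1) := (t : Fin (m + 1)) with hτ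
    have X1 : (c + τ = a) ↔ (c = a - τ) := eq_sub_iff_add_eq.symm
    have X2 : (c - 1 + τ = a) ↔ (c = a - τ + 1) := by
      rw [← eq_sub_iff_add_eq, sub_eq_iff_eq_add]
    have X3 : (0 - τ = b) ↔ (τ = -b) := by rw [zero_sub, neg_eq_iff_eq_neg]
    have X4 : (Fin.last m + τ = a) ↔ (τ = a + 1) := by
      rw [hlast, neg_add_eq_sub, sub_eq_iff_eq_add]
    have X5 : (c - τ = b) ↔ (c = b + τ) := sub_eq_iff_eq_add
    have X6 : (c + 1 - τ = b) ↔ (c = b + τ - 1) := by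
      rw [sub_eq_iff_eq_add, ← eq_sub_iff_add_eq]
    simp only [X1, X2, X3, X4, X5, X6, ht1, ht2]
    unfold dd
    by_cases h1 : τ = a + 1 <;> by_cases h2 : τ = -b
    · have k4 : b + τ - 1 = a + b := by rw [h1]; ring
      have k3 : b + τ = a + b + 1 := by rw [h1]; ring
      have k2 : a - τ + 1 = a + b + 1 := by rw [h2]; ring
      have k1 : a - τ = a + b := by rw [h2]; ring
      rw [if_pos h1, if_pos h1, if_pos h2, if_pos h2, k4, k3, k2, k1]
      ring
    · have k4 : b + τ - 1 = a + b := by rw [h1]; ring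
      have k3 : b + τ = a + b + 1 := by rw [h1]; ring
      rw [if_pos h1, if_pos h1, if_neg h2, if_neg h2, k4, k3]
      ring
    · have k2 : a - τ + 1 = a + b + 1 := by rw [h2]; ring
      have k1 : a - τ = a + b := by rw [h2]; ring
      rw [if_neg h1, if_neg h1, if_pos h2, if_pos h2, k2, k1]
      ring
    · rw [if_neg h1, if_neg h1, if_neg h2, if_neg h2]
      ring
  rcases Nat.lt_trichotomy (a + 1 : Fin (m + 1)).val (-b : Fin (m + 1)).val with hlt | heq | hgt
  · refine hgoal (orbit (fun t => ((fun A => mutate A v)^[t] M) i k) corr (a + b + 1) (a + b) hpq _ _ hlt (Fin.is_lt _) hstep ?_ ?_ ?_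
      hshapeIK)
    · rw [hcorrval _ (Fin.is_lt _)]
      funext c
      rw [if_pos rfl, if_neg (Nat.ne_of_lt hlt), add_zero]
    · rw [hcorrval _ (Fin.is_lt _)]
      funext c
      rw [if_pos rfl, if_neg (Nat.ne_of_gt hlt), zero_add]
    · intro t ht ht1 ht2
      rw [hcorrval t ht]
      funext c
      rw [if_neg ht1, if_neg ht2, add_zero]
  · refine hgoal (const_seg (fun t => ((fun A => mutate A v)^[t] M) i k) corr hstep 0 (m + 1) (by omega) (fun t ht1 ht2 => ?_)
      (shape1_shapeK hshapeIK))
    rw [hcorrval t (by omega), ← heq]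
    funext c
    by_cases h : t = (a + 1 : Fin (m + 1)).val
    · rw [if_pos h, if_pos h]
      unfold dd
      ring
    · rw [if_neg h, if_neg h, add_zero]
  · refine hgoal (orbit (fun t => ((fun A => mutate A v)^[t] M) i k) corr (a + b) (a + b + 1) hpq.symm _ _ hgt (Fin.is_lt _) hstep ?_ ?_ ?_
      hshapeIK)
    · rw [hcorrval _ (Fin.is_lt _)]
      funext c
      rw [if_pos rfl, if_neg (Nat.ne_of_lt hgt), zero_add]
    · rw [hcorrval _ (Fin.is_lt _)]
      funext c
      rw [if_pos rfl, if_neg (Nat.ne_of_gt hgt), add_zero]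
    · intro t ht ht1 ht2
      rw [hcorrval t ht]
      funext c
      rw [if_neg ht2, if_neg ht1, add_zero]

end MutClassAn
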